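/- Let L be a field, K a subfield of L, G an additive subgroup of L contained in K, t an element of L not in K, and a a nonzero element of K that is not in the image of ℤ in L. Then t/a belongs to the additive subgroup G + ℤ·(t/a) = {g + n·(t/a) : g ∈ G, n ∈ ℤ}, while t = a·(t/a) does not belong to G + ℤ·(t/a). -/

import Mathlib

/-- Let `L` be a field, `K` a subfield, `G` an additive subgroup of `L` contained in
`K`, `t ∈ L \ K`, and `a ∈ K` nonzero and not in the image of `ℤ` in `L`. Then
`t/a` belongs to the additive subgroup `G + ℤ·(t/a)`, while `t = a·(t/a)` does not. -/
theorem div_mem_not_mem_adjoined_group (L : Type*) [Field L] (K : Subfield L)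
    (G : AddSubgroup L) (hGK : (G : Set L) ⊆ (K : Set L))
    (t : L) (ht : t ∉ K) (a : L) (haK : a ∈ K) (ha0 : a ≠ 0)
    (haZ : a ∉ Set.range (Int.cast : ℤ → L)) :
    (∃ g ∈ G, ∃ n : ℤ, t / a = g + n • (t / a)) ∧
      (t = a * (t / a) ∧ ¬ ∃ g ∈ G, ∃ n : ℤ, t = g + n • (t / a)) := by
  refine ⟨⟨0, G.zero_mem, 1, by simp⟩, (mul_div_cancel₀ t ha0).symm, ?_⟩
  rintro ⟨g, hg, n, hn⟩
  have hgK : g ∈ K := hGK hg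
  have han : a ≠ (n : L) := fun h => haZ ⟨n, h.symm⟩
  -- t = g + n * t / a  ⇒  t * (a - n) = g * a
  have key : t * (a - (n : L)) = g * a := by
    rw [zsmul_eq_mul] at hn
    have h2 : (n : L) * (t / a) * a = n * t := by rw [mul_assoc, div_mul_cancel₀ t ha0]
    linear_combination a * hn + h2
  have hne : a - (n : L) ≠ 0 := sub_ne_zero.mpr han
  have : t = g * a / (a - (n : L)) := by
    field_simp
    linear_combination key
  exact ht (this ▸ K.div_mem (K.mul_mem hgK haK) (K.sub_mem haK (K.intCast_mem n)))
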